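/- For a block upper triangular isomorphism of finite-dimensional real inner product spaces, given by the matrix ((f, h), (0, g)) : V₁ ⊕ V₂ → W₁ ⊕ W₂ with f : V₁ → W₁ and g : V₂ → W₂ isomorphisms and h : V₂ → W₁ arbitrary linear, one has [[((f,h),(0,g))]] = [[f]] + [[g]], where [[·]] := (1/2)·ln|det((·)* ∘ (·))| and the direct sums carry the orthogonal direct sum inner products. -/

import Mathlib

noncomputable section

/-- `[[f]] := (1/2) · ln |det (f* ∘ f)|` for a linear map between finite-dimensional
real inner product spaces. -/
def ldet {V W : Type} [NormedAddCommGroup V] [InnerProductSpace ℝ V] [FiniteDimensional ℝ V]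
    [NormedAddCommGroup W] [InnerProductSpace ℝ W] [FiniteDimensional ℝ W]
    (f : V →ₗ[ℝ] W) : ℝ :=
  (1 / 2) * Real.log |LinearMap.det ((LinearMap.adjoint f) ∘ₗ f)|

variable {V₁ V₂ W₁ W₂ : Type}
  [NormedAddCommGroup V₁] [InnerProductSpace ℝ V₁] [FiniteDimensional ℝ V₁]
  [NormedAddCommGroup V₂] [InnerProductSpace ℝ V₂] [FiniteDimensional ℝ V₂]
  [NormedAddCommGroup W₁] [InnerProductSpace ℝ W₁] [FiniteDimensional ℝ W₁]
  [NormedAddCommGroup W₂] [InnerProductSpace ℝ W₂] [FiniteDimensional ℝ W₂]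

instance : FiniteDimensional ℝ (WithLp 2 (V₁ × V₂)) :=
  LinearEquiv.finiteDimensional (WithLp.linearEquiv 2 ℝ (V₁ × V₂)).symm

instance : FiniteDimensional ℝ (WithLp 2 (W₁ × W₂)) :=
  LinearEquiv.finiteDimensional (WithLp.linearEquiv 2 ℝ (W₁ × W₂)).symm

/-- The block upper triangular map `((f, h), (0, g)) : V₁ ⊕ V₂ → W₁ ⊕ W₂`,
`(v₁, v₂) ↦ (f v₁ + h v₂, g v₂)`, on the orthogonal (`l²`) direct sums. -/
def blockMap (f : V₁ →ₗ[ℝ] W₁) (g : V₂ →ₗ[ℝ] W₂) (h : V₂ →ₗ[ℝ] W₁) :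
    WithLp 2 (V₁ × V₂) →ₗ[ℝ] WithLp 2 (W₁ × W₂) :=
  (WithLp.linearEquiv 2 ℝ (W₁ × W₂)).symm.toLinearMap ∘ₗ
    (LinearMap.prod
      (f ∘ₗ LinearMap.fst ℝ V₁ V₂ + h ∘ₗ LinearMap.snd ℝ V₁ V₂)
      (g ∘ₗ LinearMap.snd ℝ V₁ V₂)) ∘ₗ
    (WithLp.linearEquiv 2 ℝ (V₁ × V₂)).toLinearMap

/-- Determinant of the adjoint of a real endomorphism equals the determinant. -/
lemma det_adjoint' {E : Type*} [NormedAddCommGroup E] [InnerProductSpace ℝ E]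
    [FiniteDimensional ℝ E] (T : E →ₗ[ℝ] E) :
    LinearMap.det (LinearMap.adjoint T) = LinearMap.det T := by
  classical
  let b := stdOrthonormalBasis ℝ E
  rw [← LinearMap.det_toMatrix b.toBasis, ← LinearMap.det_toMatrix b.toBasis,
    LinearMap.toMatrix_adjoint]
  simp [Matrix.det_conjTranspose]

/-- Determinant of a block upper triangular endomorphism of a product. -/
lemma det_prodTriangular (a : V₁ →ₗ[ℝ] V₁) (d : V₂ →ₗ[ℝ] V₂) (b : V₂ →ₗ[ℝ] V₁) :
    LinearMap.det (LinearMap.prod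
      (a ∘ₗ LinearMap.fst ℝ V₁ V₂ + b ∘ₗ LinearMap.snd ℝ V₁ V₂)
      (d ∘ₗ LinearMap.snd ℝ V₁ V₂)) = LinearMap.det a * LinearMap.det d := by
  classical
  let b₁ := Module.finBasis ℝ V₁
  let b₂ := Module.finBasis ℝ V₂
  rw [← LinearMap.det_toMatrix (b₁.prod b₂), ← LinearMap.det_toMatrix b₁,
    ← LinearMap.det_toMatrix b₂]
  have hM : LinearMap.toMatrix (b₁.prod b₂) (b₁.prod b₂)
      (LinearMap.prod
        (a ∘ₗ LinearMap.fst ℝ V₁ V₂ + b ∘ₗ LinearMap.snd ℝ V₁ V₂)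
        (d ∘ₗ LinearMap.snd ℝ V₁ V₂)) =
      Matrix.fromBlocks (LinearMap.toMatrix b₁ b₁ a) (LinearMap.toMatrix b₂ b₁ b)
        0 (LinearMap.toMatrix b₂ b₂ d) := by
    ext (i | i) (j | j) <;>
      simp [LinearMap.toMatrix_apply, Module.Basis.prod_apply, Matrix.fromBlocks, b₁, b₂]
  rw [hM, Matrix.det_fromBlocks_zero₂₁]

/-- Determinant of a block triangular `blockMap` endomorphism. -/
lemma det_blockMap_endo (a : V₁ →ₗ[ℝ] V₁) (d : V₂ →ₗ[ℝ] V₂) (b : V₂ →ₗ[ℝ] V₁) :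
    LinearMap.det (blockMap a d b) = LinearMap.det a * LinearMap.det d := by
  have : blockMap a d b =
      ((WithLp.linearEquiv 2 ℝ (V₁ × V₂)).symm : (V₁ × V₂) ≃ₗ[ℝ] WithLp 2 (V₁ × V₂)).toLinearMap
        ∘ₗ (LinearMap.prod
          (a ∘ₗ LinearMap.fst ℝ V₁ V₂ + b ∘ₗ LinearMap.snd ℝ V₁ V₂)
          (d ∘ₗ LinearMap.snd ℝ V₁ V₂)) ∘ₗ
        ((WithLp.linearEquiv 2 ℝ (V₁ × V₂)).symm).symm.toLinearMap := rfl
  rw [this, LinearMap.det_conj, det_prodTriangular]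

/-- The adjoint of a block diagonal map is block diagonal with adjoint entries. -/
lemma adjoint_blockMap_diag (f : V₁ →ₗ[ℝ] W₁) (g : V₂ →ₗ[ℝ] W₂) :
    LinearMap.adjoint (blockMap f g 0) =
      blockMap (LinearMap.adjoint f) (LinearMap.adjoint g) 0 := by
  symm
  rw [LinearMap.eq_adjoint_iff]
  intro x y
  simp only [blockMap, LinearMap.coe_comp, Function.comp_apply, LinearEquiv.coe_coe,
    WithLp.linearEquiv_apply, WithLp.linearEquiv_symm_apply, LinearMap.prod_apply,
    LinearMap.add_apply, LinearMap.zero_comp, LinearMap.zero_apply, add_zero,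
    LinearMap.fst_apply, LinearMap.snd_apply,
    Pi.prod, WithLp.prod_inner_apply]
  simp [LinearMap.adjoint_inner_left]

/-- `[[((f,h),(0,g))]] = [[f]] + [[g]]` for a block upper triangular
isomorphism of orthogonal direct sums of finite-dimensional real inner product spaces. -/
theorem ldet_blockMap (f : V₁ →ₗ[ℝ] W₁) (g : V₂ →ₗ[ℝ] W₂) (h : V₂ →ₗ[ℝ] W₁)
    (hf : Function.Bijective f) (hg : Function.Bijective g) :
    ldet (blockMap f g h) = ldet f + ldet g := by
  classical
  set finv := ((LinearEquiv.ofBijective f hf).symm : W₁ ≃ₗ[ℝ] V₁).toLinearMap with hfinv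
  set T : WithLp 2 (V₁ × V₂) →ₗ[ℝ] WithLp 2 (V₁ × V₂) :=
    blockMap LinearMap.id LinearMap.id (finv ∘ₗ h) with hT
  set D : WithLp 2 (V₁ × V₂) →ₗ[ℝ] WithLp 2 (W₁ × W₂) := blockMap f g 0 with hD
  have hfact : blockMap f g h = D ∘ₗ T := by
    apply LinearMap.ext
    intro x
    simp only [hD, hT, blockMap, LinearMap.coe_comp, Function.comp_apply, LinearEquiv.coe_coe,
      WithLp.linearEquiv_apply, WithLp.linearEquiv_symm_apply, LinearMap.prod_apply,
      LinearMap.add_apply, LinearMap.zero_comp, LinearMap.zero_apply, add_zero,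
      LinearMap.fst_apply, LinearMap.snd_apply,
      Function.prod, LinearMap.id_coe, id_eq]
    have : f (finv (h x.snd)) = h x.snd := (LinearEquiv.ofBijective f hf).apply_symm_apply _
    simp [this, map_add]
  have hDD : LinearMap.adjoint D ∘ₗ D =
      blockMap (LinearMap.adjoint f ∘ₗ f) (LinearMap.adjoint g ∘ₗ g) 0 := by
    rw [hD, adjoint_blockMap_diag]
    apply LinearMap.ext
    intro x
    simp [blockMap]
  have hdetT : LinearMap.det T = 1 := by
    rw [hT, det_blockMap_endo]; simp
  have key : LinearMap.det (LinearMap.adjoint (blockMap f g h) ∘ₗ blockMap f g h) =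
      LinearMap.det (LinearMap.adjoint f ∘ₗ f) * LinearMap.det (LinearMap.adjoint g ∘ₗ g) := by
    rw [hfact, LinearMap.adjoint_comp]
    have : (LinearMap.adjoint T ∘ₗ LinearMap.adjoint D) ∘ₗ (D ∘ₗ T) =
        LinearMap.adjoint T ∘ₗ ((LinearMap.adjoint D ∘ₗ D) ∘ₗ T) := by
      simp [LinearMap.comp_assoc]
    rw [this, LinearMap.det_comp, LinearMap.det_comp, det_adjoint', hdetT, hDD,
      det_blockMap_endo]
    ring
  -- nonvanishing of the determinants
  have hne : ∀ {V W : Type} [NormedAddCommGroup V] [InnerProductSpace ℝ V]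
      [FiniteDimensional ℝ V] [NormedAddCommGroup W] [InnerProductSpace ℝ W]
      [FiniteDimensional ℝ W] (u : V →ₗ[ℝ] W), Function.Injective u →
      LinearMap.det (LinearMap.adjoint u ∘ₗ u) ≠ 0 := by
    intro V W _ _ _ _ _ _ u hu h0
    obtain ⟨x, hx, hx0⟩ := SetLike.exists_of_lt (LinearMap.bot_lt_ker_of_det_eq_zero h0)
    have hux : LinearMap.adjoint u (u x) = 0 := hx
    have h2 : (inner ℝ (u x) (u x) : ℝ) = 0 := by
      rw [← LinearMap.adjoint_inner_left, hux, inner_zero_left]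
    have h3 : u x = 0 := inner_self_eq_zero.mp h2
    exact hx0 (hu (by simpa using h3))
  have hfne := hne f hf.injective
  have hgne := hne g hg.injective
  rw [ldet, ldet, ldet, key, abs_mul, Real.log_mul (abs_ne_zero.mpr hfne) (abs_ne_zero.mpr hgne)]
  ring
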